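/- The partition function P_X is the unique ℤ-valued function on Γ satisfying ∇_X P_X = δ₀ whose support is contained in the cone C(X). -/

import Mathlib

open Function

attribute [local instance] Classical.propDecidable

noncomputable section

/-- The lattice `Γ = ι → ℤ`. -/
abbrev ZLat (ι : Type*) := ι → ℤ
/-- The ambient real vector space `V = Γ ⊗ ℝ = ι → ℝ`. -/
abbrev Amb (ι : Type*) := ι → ℝ

variable {ι : Type*} [Fintype ι]

/-- Embedding of the lattice into the ambient space. -/
def castV (γ : ZLat ι) : Amb ι := fun i => (γ i : ℝ)

/-- Standard pairing on `V`. -/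
def dotR (u v : Amb ι) : ℝ := ∑ i, u i * v i

/-- The difference operator `∇ₐ`. -/
def nab (a : ZLat ι) (f : ZLat ι → ℤ) : ZLat ι → ℤ := fun b => f b - f (b - a)

/-- `∇_Y = ∏_{a ∈ Y} ∇ₐ` for a list `Y`. -/
def nabL (Y : List (ZLat ι)) (f : ZLat ι → ℤ) : ZLat ι → ℤ := Y.foldr nab f

/-- Delta function at `0`. -/
def delta0 : ZLat ι → ℤ := fun γ => if γ = 0 then 1 else 0

/-- The partition function of a list `Y`: the number of ways of writing `γ` as a
nonnegative integral combination of the entries of `Y`. -/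
def partFn (Y : List (ZLat ι)) : ZLat ι → ℤ :=
  fun γ => Nat.card {k : Fin Y.length → ℕ // ∑ i, (k i : ℤ) • Y.get i = γ}

/-- The cone `C(Y)` of nonnegative real combinations of the entries of `Y`. -/
def coneC (Y : List (ZLat ι)) : Set (Amb ι) :=
  {v | ∃ t : Fin Y.length → ℝ, (∀ i, 0 ≤ t i) ∧ v = ∑ i, t i • castV (Y.get i)}

/-- `C(Y)` is pointed: it contains no line. -/
def PointedList (Y : List (ZLat ι)) : Prop :=
  ∀ v ∈ coneC Y, -v ∈ coneC Y → v = 0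

/-- The zonotope `B(Y) = {∑ tᵢ aᵢ : 0 ≤ tᵢ ≤ 1}`. -/
def zono (Y : List (ZLat ι)) : Set (Amb ι) :=
  {v | ∃ t : Fin Y.length → ℝ, (∀ i, 0 ≤ t i ∧ t i ≤ 1) ∧ v = ∑ i, t i • castV (Y.get i)}

/-- The real span of a list of lattice vectors. -/
def spanOf (Y : List (ZLat ι)) : Submodule ℝ (Amb ι) :=
  Submodule.span ℝ (castV '' {a | a ∈ Y})

/-- A subspace is rational (relative to `X`) if it is spanned by a sublist of `X`. -/
def IsRational (X : List (ZLat ι)) (r : Submodule ℝ (Amb ι)) : Prop :=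
  ∃ Y : List (ZLat ι), (∀ a ∈ Y, a ∈ X) ∧ r = spanOf Y

/-- The sublist `X ∩ r`. -/
def inSub (X : List (ZLat ι)) (r : Submodule ℝ (Amb ι)) : List (ZLat ι) :=
  X.filter (fun a => decide (castV a ∈ r))

/-- The sublist `X \ r`. -/
def outSub (X : List (ZLat ι)) (r : Submodule ℝ (Amb ι)) : List (ZLat ι) :=
  X.filter (fun a => decide (castV a ∉ r))

/-- The operator `∇_{X \ r}`. -/
def nabOut (X : List (ZLat ι)) (r : Submodule ℝ (Amb ι)) (f : ZLat ι → ℤ) : ZLat ι → ℤ :=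
  nabL (outSub X r) f

/-- The space `𝓕(X)`: `∇_{X\r} f` is supported on `Γ ∩ r` for every rational `r`. -/
def memF (X : List (ZLat ι)) (f : ZLat ι → ℤ) : Prop :=
  ∀ r, IsRational X r → support (nabOut X r f) ⊆ {γ | castV γ ∈ r}

/-- The Dahmen–Micchelli space of a list `Y` (inside its span): `f` is killed by
`∇_{Y \ H}` for every rational hyperplane `H` of the span of `Y`. -/
def memDM (Y : List (ZLat ι)) (f : ZLat ι → ℤ) : Prop :=
  ∀ H, IsRational Y H → Module.finrank ℝ H + 1 = Module.finrank ℝ (spanOf Y) →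
    nabOut Y H f = 0

/-- `𝓕(X ∩ r)`, viewed as functions on `Γ` supported on `Γ ∩ r`. -/
def memFrel (X : List (ZLat ι)) (r : Submodule ℝ (Amb ι)) (g : ZLat ι → ℤ) : Prop :=
  support g ⊆ {γ | castV γ ∈ r} ∧ memF (inSub X r) g

/-- `DM(X ∩ r)`, viewed as functions on `Γ` supported on `Γ ∩ r`. -/
def memDMrel (X : List (ZLat ι)) (r : Submodule ℝ (Amb ι)) (g : ZLat ι → ℤ) : Prop :=
  support g ⊆ {γ | castV γ ∈ r} ∧ memDM (inSub X r) g

/-- `u` is a regular vector for `X \ r`:  `u ∈ r^⊥` and `⟨u, a⟩ ≠ 0` for all `a ∈ X \ r`.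
It determines the regular face `F` containing it. -/
def Reg (X : List (ZLat ι)) (r : Submodule ℝ (Amb ι)) (u : Amb ι) : Prop :=
  (∀ v ∈ r, dotR u v = 0) ∧ ∀ a ∈ X, castV a ∉ r → dotR u (castV a) ≠ 0

/-- The sublist `B ⊆ X \ r` of elements negative on `u`. -/
def negPart (X : List (ZLat ι)) (r : Submodule ℝ (Amb ι)) (u : Amb ι) : List (ZLat ι) :=
  (outSub X r).filter (fun a => decide (dotR u (castV a) < 0))

/-- The list `[A, -B]`: entries of `X \ r`, with sign flipped on the part negative on `u`. -/
def signedOut (X : List (ZLat ι)) (r : Submodule ℝ (Amb ι)) (u : Amb ι) : List (ZLat ι) :=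
  (outSub X r).map (fun a => if 0 < dotR u (castV a) then a else -a)

/-- The special function `𝓟_{X\r}^F` for the face `F ∋ u`:
`(-1)^{|B|} τ_{-∑_{b∈B} b} (∏_{a∈A} ∑_k δ_{ka}) * (∏_{b∈B} ∑_k δ_{-kb})`. -/
def PF (X : List (ZLat ι)) (r : Submodule ℝ (Amb ι)) (u : Amb ι) : ZLat ι → ℤ :=
  fun γ => (-1) ^ (negPart X r u).length *
    partFn (signedOut X r u) (γ + (negPart X r u).sum)

/-- The support region `-∑_{b∈B} b + C(A, -B)` of `𝓟_{X\r}^F`, as a subset of `Γ`. -/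
def PFsupp (X : List (ZLat ι)) (r : Submodule ℝ (Amb ι)) (u : Amb ι) : Set (ZLat ι) :=
  {γ | castV (γ + (negPart X r u).sum) ∈ coneC (signedOut X r u)}

/-- Convolution of two functions on the lattice. -/
def conv (f g : ZLat ι → ℤ) : ZLat ι → ℤ := fun γ => ∑ᶠ μ, f (γ - μ) * g μ

/-- The union of all rational hyperplanes (inside the span of `Y`). -/
def hyperUnion (Y : List (ZLat ι)) : Set (Amb ι) :=
  {v | ∃ H, IsRational Y H ∧ Module.finrank ℝ H + 1 = Module.finrank ℝ (spanOf Y) ∧ v ∈ H}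

/-- A tope for `Y`: a connected component of the complement (in the span of `Y`) of the
union of the hyperplanes spanned by sublists of `Y`. -/
def IsTope (Y : List (ZLat ι)) (τ : Set (Amb ι)) : Prop :=
  ∃ v ∈ (spanOf Y : Set (Amb ι)) \ hyperUnion Y,
    τ = connectedComponentIn ((spanOf Y : Set (Amb ι)) \ hyperUnion Y) v

/-- The set of singular vectors: the union of the cones `C(Y)` over sublists `Y` of `X`
not spanning `V`. -/
def singSet (X : List (ZLat ι)) : Set (Amb ι) :=
  {v | ∃ Y : List (ZLat ι), (∀ a ∈ Y, a ∈ X) ∧ spanOf Y ≠ ⊤ ∧ v ∈ coneC Y}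

/-- A big cell: a connected component of the complement of the set of singular vectors. -/
def IsBigCell (X : List (ZLat ι)) (c : Set (Amb ι)) : Prop :=
  ∃ v ∈ (singSet X)ᶜ, c = connectedComponentIn (singSet X)ᶜ v

/-- Minkowski difference of sets, `A - B`. -/
def sdiffSet (A B : Set (Amb ι)) : Set (Amb ι) := {x | ∃ a ∈ A, ∃ b ∈ B, x = a - b}
set_option linter.unusedSectionVars false
set_option maxHeartbeats 1000000

section MyAux

variable {ι : Type*} [Fintype ι]

lemma castV_injective : Function.Injective (castV (ι := ι)) := by
  intro a b h
  funext i
  have := congrFun h i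
  simpa [castV] using this

lemma castV_intComb {n : ℕ} (v : Fin n → ZLat ι) (k : Fin n → ℤ) :
    castV (∑ i, k i • v i) = ∑ i, (k i : ℝ) • castV (v i) := by
  funext j
  simp only [castV, Finset.sum_apply, Pi.smul_apply, smul_eq_mul]
  push_cast
  rfl

lemma dotR_sum (u : Amb ι) {n : ℕ} (v : Fin n → Amb ι) :
    dotR u (∑ i, v i) = ∑ i, dotR u (v i) := by
  simp only [dotR, Finset.sum_apply, Finset.mul_sum]
  exact Finset.sum_comm

lemma dotR_smulR (u : Amb ι) (c : ℝ) (v : Amb ι) : dotR u (c • v) = c * dotR u v := by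
  simp only [dotR, Pi.smul_apply, smul_eq_mul, Finset.mul_sum]
  congr 1; funext i; ring

lemma dotR_sub (u : Amb ι) (a b : Amb ι) : dotR u (a - b) = dotR u a - dotR u b := by
  simp only [dotR, Pi.sub_apply, mul_sub, Finset.sum_sub_distrib]

lemma castV_sub (a b : ZLat ι) : castV (a - b) = castV a - castV b := by
  funext i; simp [castV]

/-- The representation set. -/
def repSet (Y : List (ZLat ι)) (γ : ZLat ι) : Set (Fin Y.length → ℕ) :=
  {k | ∑ i, (k i : ℤ) • Y.get i = γ}

lemma partFn_eq (Y : List (ZLat ι)) (γ : ZLat ι) :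
    partFn Y γ = Nat.card (repSet Y γ) := rfl

/-- Finiteness of the representation set given a positive functional. -/
lemma repSet_finite {u : Amb ι} {c : ℝ} (hc : 0 < c) (Y : List (ZLat ι))
    (hY : ∀ a ∈ Y, c ≤ dotR u (castV a)) (γ : ZLat ι) : (repSet Y γ).Finite := by
  obtain ⟨N, hN⟩ := exists_nat_gt (dotR u (castV γ) / c)
  apply Set.Finite.subset (Set.finite_Iic (fun _ : Fin Y.length => N))
  intro k hk
  simp only [Set.mem_Iic, Pi.le_def]
  intro i
  by_contra hik
  push_neg at hik
  have hsum : ∑ j, (k j : ℝ) * dotR u (castV (Y.get j)) = dotR u (castV γ) := by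
    have := congrArg (dotR u) (congrArg castV hk)
    rw [castV_intComb, dotR_sum] at this
    rw [← this]
    refine Finset.sum_congr rfl fun j _ => ?_
    rw [dotR_smulR]
    push_cast
    ring
  have hterm : ∀ j, (0:ℝ) ≤ (k j : ℝ) * dotR u (castV (Y.get j)) := by
    intro j
    have h2 := hc.trans_le (hY _ (Y.get_mem j))
    exact mul_nonneg (Nat.cast_nonneg _) h2.le
  have hbound : (k i : ℝ) * c ≤ dotR u (castV γ) := by
    calc (k i : ℝ) * c ≤ (k i : ℝ) * dotR u (castV (Y.get i)) := by
          have := hY _ (Y.get_mem i); nlinarith [Nat.cast_nonneg (α := ℝ) (k i)]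
      _ ≤ ∑ j, (k j : ℝ) * dotR u (castV (Y.get j)) :=
          Finset.single_le_sum (fun j _ => hterm j) (Finset.mem_univ i)
      _ = dotR u (castV γ) := hsum
  have : (N:ℝ) < (k i : ℝ) := by exact_mod_cast hik
  have := (div_lt_iff₀ hc).mp hN
  nlinarith

end MyAux

section MyAux2
variable {ι : Type*} [Fintype ι]

lemma tail_update {n : ℕ} (k : Fin (n+1) → ℕ) (m : ℕ) :
    Fin.tail (Function.update k 0 m) = Fin.tail k := by
  funext i
  simp [Fin.tail, Function.update, (Fin.succ_ne_zero i)]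

lemma update_injective {n : ℕ} : Function.Injective
    (fun k : Fin (n+1) → ℕ => Function.update k 0 (k 0 + 1)) := by
  intro k k' h
  funext j
  by_cases hj : j = 0
  · subst hj
    have := congrFun h 0
    simpa using this
  · have := congrFun h j
    simpa [Function.update, hj] using this

lemma partFn_cons_card {u : Amb ι} {c : ℝ} (hc : 0 < c) (a : ZLat ι) (Y : List (ZLat ι))
    (ha : c ≤ dotR u (castV a)) (hY : ∀ b ∈ Y, c ≤ dotR u (castV b)) (γ : ZLat ι) :
    Nat.card (repSet (a::Y) γ) =
      Nat.card (repSet Y γ) + Nat.card (repSet (a::Y) (γ - a)) := by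
  classical
  have key : ∀ (δ : ZLat ι) (k : Fin (Y.length+1) → ℕ), k ∈ repSet (a::Y) δ ↔
      (k 0 : ℤ) • a + ∑ i, ((Fin.tail k) i : ℤ) • Y.get i = δ := by
    intro δ k
    show (∑ i : Fin (Y.length+1), (k i : ℤ) • (a::Y).get i = δ) ↔ _
    rw [Fin.sum_univ_succ]
    exact Iff.rfl
  have hcons : ∀ b ∈ (a::Y), c ≤ dotR u (castV b) := by
    intro b hb
    rcases List.mem_cons.mp hb with h | h
    · subst h; exact ha
    · exact hY b h
  have h1 := repSet_finite hc _ hcons γ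
  have h2 := repSet_finite hc Y hY γ
  have h3 := repSet_finite hc _ hcons (γ - a)
  set g : (Fin (Y.length+1) → ℕ) → (Fin (Y.length+1) → ℕ) :=
    fun k => Function.update k 0 (k 0 + 1) with hg
  have hA : repSet (a::Y) γ =
      (Fin.cons 0 '' repSet Y γ) ∪ (g '' repSet (a::Y) (γ - a)) := by
    refine Set.ext (fun k : Fin (Y.length+1) → ℕ => ?_)
    rw [key γ k]
    constructor
    · intro hk'
      rcases Nat.eq_zero_or_pos (k 0) with h0 | h0
      · left
        refine ⟨Fin.tail k, ?_, ?_⟩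
        · show _ = γ
          rw [← hk', h0]; simp
        · funext j
          refine Fin.cases ?_ ?_ j
          · simp [h0, Fin.cons_zero]
          · intro i; simp [Fin.cons_succ, Fin.tail]
      · right
        obtain ⟨m, hm⟩ : ∃ m, k 0 = m + 1 := ⟨k 0 - 1, by omega⟩
        refine ⟨Function.update k 0 m, ?_, ?_⟩
        · rw [key (γ - a)]
          rw [tail_update]
          simp only [Function.update_self]
          have hsm : ((k 0 : ℤ)) • a = (m:ℤ) • a + a := by
            rw [hm]; push_cast; rw [add_smul, one_smul]
          rw [← hk', hsm]
          abel
        · show g _ = k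
          rw [hg]
          simp only [Function.update_self, Function.update_idem]
          rw [← hm]
          exact Function.update_eq_self _ _
    · rintro (⟨k', hk', rfl⟩ | ⟨k', hk', rfl⟩)
      · rw [Fin.cons_zero, Fin.tail_cons]
        simp only [Nat.cast_zero, zero_smul, zero_add]
        exact hk'
      · rw [key (γ - a)] at hk'
        rw [hg]
        simp only [Function.update_self]
        rw [tail_update]
        push_cast
        rw [add_smul, one_smul]
        rw [add_right_comm, hk']
        abel
  have hdisj : Disjoint (Fin.cons 0 '' repSet Y γ) (g '' repSet (a::Y) (γ - a)) := by
    rw [Set.disjoint_left]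
    rintro k ⟨k', _, rfl⟩ ⟨k'', _, hk⟩
    have := congrFun hk 0
    simp [hg, Fin.cons_zero] at this
  rw [Nat.card_coe_set_eq, Nat.card_coe_set_eq, Nat.card_coe_set_eq, hA]
  rw [Set.ncard_union_eq hdisj (h2.image _) (h3.image _)]
  rw [Set.ncard_image_of_injective _ (Fin.cons_right_injective 0),
    Set.ncard_image_of_injective _ update_injective]

end MyAux2

section MyAux3
variable {ι : Type*} [Fintype ι]

lemma nab_comm (a b : ZLat ι) (f : ZLat ι → ℤ) : nab a (nab b f) = nab b (nab a f) := by
  funext γ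
  simp only [nab]
  rw [sub_right_comm γ b a]
  ring

lemma nabL_cons (a : ZLat ι) (Y : List (ZLat ι)) (f : ZLat ι → ℤ) :
    nabL (a::Y) f = nab a (nabL Y f) := rfl

lemma nabL_nab (Y : List (ZLat ι)) (a : ZLat ι) (f : ZLat ι → ℤ) :
    nabL Y (nab a f) = nab a (nabL Y f) := by
  induction Y with
  | nil => rfl
  | cons b Y ih => rw [nabL_cons, nabL_cons, ih, nab_comm]

lemma partFn_nil : partFn ([] : List (ZLat ι)) = delta0 := by
  funext γ
  unfold partFn delta0
  by_cases h : γ = 0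
  · subst h
    simp only [if_pos rfl]
    haveI : Unique {k : Fin (List.length ([] : List (ZLat ι))) → ℕ //
        ∑ i, (k i : ℤ) • ([] : List (ZLat ι)).get i = 0} :=
      ⟨⟨⟨fun i => 0, by simp⟩⟩, by
        rintro ⟨k, hk⟩
        apply Subtype.ext
        funext i
        exact absurd i.isLt (by simp)⟩
    simp [Nat.card_unique]
  · rw [if_neg h]
    haveI : IsEmpty {k : Fin (List.length ([] : List (ZLat ι))) → ℕ //
        ∑ i, (k i : ℤ) • ([] : List (ZLat ι)).get i = γ} := by
      constructor
      rintro ⟨k, hk⟩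
      apply h
      rw [← hk]
      simp
    rw [@Nat.card_of_isEmpty _ this]
    rfl

lemma nabL_partFn {u : Amb ι} {c : ℝ} (hc : 0 < c) :
    ∀ Y : List (ZLat ι), (∀ a ∈ Y, c ≤ dotR u (castV a)) → nabL Y (partFn Y) = delta0 := by
  intro Y
  induction Y with
  | nil => intro _; simpa [nabL] using (partFn_nil (ι := ι))
  | cons a Y ih =>
    intro h
    have hY : ∀ b ∈ Y, c ≤ dotR u (castV b) := fun b hb => h b (List.mem_cons_of_mem _ hb)
    have ha := h a (List.mem_cons_self)
    have hstep : nab a (partFn (a::Y)) = partFn Y := by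
      funext γ
      have hcard := partFn_cons_card hc a Y ha hY γ
      show (partFn (a::Y) γ) - (partFn (a::Y) (γ - a)) = partFn Y γ
      rw [partFn_eq, partFn_eq, partFn_eq, hcard]
      push_cast
      ring
    rw [nabL_cons, ← nabL_nab, hstep, ih hY]

lemma partFn_support (X : List (ZLat ι)) :
    Function.support (partFn X) ⊆ {γ | castV γ ∈ coneC X} := by
  intro γ hγ
  have hne : Nat.card (repSet X γ) ≠ 0 := by
    intro h
    apply hγ
    rw [partFn_eq, h]
    rfl
  have : Nonempty (repSet X γ) := (Nat.card_ne_zero.mp hne).1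
  obtain ⟨⟨k, hk⟩⟩ := this
  refine ⟨fun i => (k i : ℝ), fun i => Nat.cast_nonneg _, ?_⟩
  rw [← hk, castV_intComb]
  refine Finset.sum_congr rfl fun i _ => ?_
  push_cast
  rfl

lemma cone_nonneg {u : Amb ι} {c : ℝ} {X : List (ZLat ι)}
    (hX : ∀ a ∈ X, c ≤ dotR u (castV a)) (hc : 0 < c) {v : Amb ι} (hv : v ∈ coneC X) :
    0 ≤ dotR u v := by
  obtain ⟨t, ht0, rfl⟩ := hv
  rw [dotR_sum]
  refine Finset.sum_nonneg fun i _ => ?_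
  rw [dotR_smulR]
  have := hc.trans_le (hX _ (X.get_mem i))
  exact mul_nonneg (ht0 i) this.le

lemma support_nabL_halfspace {u : Amb ι} :
    ∀ (Y : List (ZLat ι)), (∀ a ∈ Y, 0 < dotR u (castV a)) → ∀ (g : ZLat ι → ℤ),
    (∀ γ, dotR u (castV γ) < 0 → g γ = 0) →
    ∀ γ, dotR u (castV γ) < 0 → nabL Y g γ = 0 := by
  intro Y
  induction Y with
  | nil => intro _ g hg γ hγ; exact hg γ hγ
  | cons a Y ih =>
    intro h g hg γ hγ
    have ha := h a (List.mem_cons_self)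
    have hY : ∀ b ∈ Y, 0 < dotR u (castV b) := fun b hb => h b (List.mem_cons_of_mem _ hb)
    show nabL Y g γ - nabL Y g (γ - a) = 0
    rw [ih hY g hg γ hγ, ih hY g hg (γ - a) (by rw [castV_sub, dotR_sub]; linarith)]
    ring

lemma castV_nsmul (m : ℕ) (a : ZLat ι) : castV (m • a) = (m : ℝ) • castV a := by
  funext i
  show (((m • a) i : ℤ) : ℝ) = (m:ℝ) * ((a i : ℤ) : ℝ)
  have h1 : (m • a) i = (m : ℤ) * a i := by
    simp [mul_comm]
  rw [h1]
  push_cast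
  ring

lemma nabL_eq_zero_imp {u : Amb ι} {c : ℝ} (hc : 0 < c) :
    ∀ (Y : List (ZLat ι)), (∀ a ∈ Y, c ≤ dotR u (castV a)) → ∀ (g : ZLat ι → ℤ),
    (∀ γ, dotR u (castV γ) < 0 → g γ = 0) → nabL Y g = 0 → g = 0 := by
  intro Y
  induction Y with
  | nil => intro _ g _ h; exact h
  | cons a Y ih =>
    intro h g hg hL
    have ha := hc.trans_le (h a (List.mem_cons_self))
    have hY : ∀ b ∈ Y, c ≤ dotR u (castV b) := fun b hb => h b (List.mem_cons_of_mem _ hb)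
    have hYpos : ∀ b ∈ Y, 0 < dotR u (castV b) := fun b hb => hc.trans_le (hY b hb)
    set hfun := nabL Y g with hh
    have hshift : ∀ γ, hfun γ = hfun (γ - a) := by
      intro γ
      have := congrFun hL γ
      rw [nabL_cons] at this
      have : hfun γ - hfun (γ - a) = 0 := this
      linarith
    have hiter : ∀ (m : ℕ) (γ), hfun γ = hfun (γ - m • a) := by
      intro m
      induction m with
      | zero => intro γ; simp
      | succ n ihm =>
        intro γ
        rw [ihm γ, hshift (γ - n • a)]
        congr 1
        rw [succ_nsmul, sub_sub]
    have hzero : hfun = 0 := by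
      funext γ
      obtain ⟨m, hm⟩ := exists_nat_gt (dotR u (castV γ) / dotR u (castV a))
      rw [hiter m γ]
      have hlt : dotR u (castV (γ - m • a)) < 0 := by
        rw [castV_sub, dotR_sub, castV_nsmul, dotR_smulR]
        rw [div_lt_iff₀ ha] at hm
        linarith
      exact support_nabL_halfspace Y hYpos g hg _ hlt
    exact ih hY g hg hzero

lemma nab_sub (a : ZLat ι) (f g : ZLat ι → ℤ) : nab a (f - g) = nab a f - nab a g := by
  funext γ
  simp only [nab, Pi.sub_apply]
  ring

lemma nabL_sub (Y : List (ZLat ι)) (f g : ZLat ι → ℤ) :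
    nabL Y (f - g) = nabL Y f - nabL Y g := by
  induction Y with
  | nil => rfl
  | cons a Y ih => rw [nabL_cons, nabL_cons, nabL_cons, ih, nab_sub]

end MyAux3

section MySep
variable {ι : Type*} [Fintype ι]

lemma exists_pos_functional (X : List (ZLat ι)) (hX0 : ∀ a ∈ X, a ≠ 0)
    (hpt : PointedList X) :
    ∃ (u : Amb ι) (c : ℝ), 0 < c ∧ ∀ a ∈ X, c ≤ dotR u (castV a) := by
  classical
  set s : Set (Amb ι) := castV '' {a | a ∈ X} with hs
  have hfin : s.Finite := (X.finite_toSet).image _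
  have h0 : (0 : Amb ι) ∉ convexHull ℝ s := by
    intro h0
    rw [mem_convexHull_iff_exists_fintype] at h0
    obtain ⟨κ, hκ, w, z, hw0, hw1, hz, hsum⟩ := h0
    have hidx : ∀ i, ∃ j : Fin X.length, castV (X.get j) = z i := by
      intro i
      obtain ⟨a, ha, hza⟩ := hz i
      obtain ⟨j, hj⟩ := List.mem_iff_get.mp ha
      exact ⟨j, by rw [hj]; exact hza⟩
    choose idx hidxe using hidx
    set v : Fin X.length → Amb ι := fun j => castV (X.get j) with hv
    set W : Fin X.length → ℝ := fun j => ∑ i ∈ Finset.univ.filter (fun i => idx i = j), w i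
      with hW
    have hW0 : ∀ j, 0 ≤ W j := fun j => Finset.sum_nonneg fun i _ => hw0 i
    have hWsum1 : ∑ j, W j = 1 := by
      rw [hW]
      rw [Finset.sum_fiberwise Finset.univ idx w]
      exact hw1
    have hWsum : ∑ j, W j • v j = 0 := by
      have : ∀ j, W j • v j = ∑ i ∈ Finset.univ.filter (fun i => idx i = j), w i • z i := by
        intro j
        rw [hW, Finset.sum_smul]
        refine Finset.sum_congr rfl fun i hi => ?_
        have hij : idx i = j := (Finset.mem_filter.mp hi).2
        rw [← hij]
        show w i • castV (X.get (idx i)) = w i • z i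
        rw [hidxe]
      rw [Finset.sum_congr rfl fun j _ => this j,
        Finset.sum_fiberwise Finset.univ idx (fun i => w i • z i), hsum]
    obtain ⟨j0, hj0⟩ : ∃ j, 0 < W j := by
      by_contra hcon
      push_neg at hcon
      have : ∑ j, W j = 0 :=
        le_antisymm (Finset.sum_nonpos fun j _ => hcon j)
          (Finset.sum_nonneg fun j _ => hW0 j)
      rw [hWsum1] at this
      exact one_ne_zero this
    have hv1 : v j0 ∈ coneC X := by
      refine ⟨fun j => if j = j0 then 1 else 0, fun j => by positivity, ?_⟩
      rw [show ∑ j, (if j = j0 then (1:ℝ) else 0) • castV (X.get j)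
          = ∑ j, (if j = j0 then castV (X.get j0) else 0) from
        Finset.sum_congr rfl fun j _ => by split <;> simp_all]
      rw [Finset.sum_ite_eq' Finset.univ j0 (fun _ => castV (X.get j0)),
        if_pos (Finset.mem_univ j0)]
    have hv2 : -v j0 ∈ coneC X := by
      refine ⟨fun j => (W j0)⁻¹ * (Function.update W j0 0 j), fun j => ?_, ?_⟩
      · show 0 ≤ (W j0)⁻¹ * (Function.update W j0 0 j)
        by_cases hj : j = j0
        · subst hj
          rw [Function.update_self, mul_zero]
        · rw [Function.update_of_ne hj]
          have h1 := hW0 j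
          have h2 := hj0
          positivity
      · have hsplit : ∑ j, (Function.update W j0 0 j) • v j = - (W j0 • v j0) := by
          have h1 : ∑ j, (Function.update W j0 0 j) • v j
              = ∑ j ∈ Finset.univ.erase j0, W j • v j := by
            rw [← Finset.add_sum_erase _ _ (Finset.mem_univ j0)]
            simp only [Function.update_self, zero_smul, zero_add]
            refine Finset.sum_congr rfl fun j hj => ?_
            rw [Function.update_of_ne (Finset.ne_of_mem_erase hj)]
          have h2 : W j0 • v j0 + ∑ j ∈ Finset.univ.erase j0, W j • v j = 0 := by
            rw [← Finset.add_sum_erase Finset.univ (fun j => W j • v j)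
              (Finset.mem_univ j0)] at hWsum
            exact hWsum
          rw [h1]
          linear_combination (norm := module) h2
        have : ∑ j, ((W j0)⁻¹ * (Function.update W j0 0 j)) • v j
            = (W j0)⁻¹ • ∑ j, (Function.update W j0 0 j) • v j := by
          rw [Finset.smul_sum]
          refine Finset.sum_congr rfl fun j _ => ?_
          rw [smul_smul]
        rw [this, hsplit, smul_neg, smul_smul, inv_mul_cancel₀ hj0.ne', one_smul]
    have hz0 := hpt _ hv1 hv2
    have hz0' : castV (X.get j0) = 0 := hz0
    refine hX0 _ (X.get_mem j0) (castV_injective ?_)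
    exact hz0'.trans (funext fun i => by simp [castV])
  have hclosed : IsClosed (convexHull ℝ s) := hfin.isClosed_convexHull (𝕜 := ℝ)
  obtain ⟨f, c, hc0, hcb⟩ :=
    geometric_hahn_banach_point_closed (convex_convexHull ℝ s) hclosed h0
  have hc : 0 < c := by simpa using hc0
  refine ⟨fun i => f (Pi.single i 1), c, hc, ?_⟩
  intro a ha
  have hmem : castV a ∈ convexHull ℝ s := subset_convexHull ℝ s ⟨a, ha, rfl⟩
  have hgt := hcb _ hmem
  have hrep : dotR (fun i => f (Pi.single i 1)) (castV a) = f (castV a) := by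
    have hv : castV a = ∑ i, (castV a i) • (Pi.single i 1 : Amb ι) := by
      funext j
      rw [Finset.sum_apply]
      simp [Pi.single_apply, Finset.sum_ite_eq]
    calc dotR (fun i => f (Pi.single i 1)) (castV a)
        = ∑ i, f ((castV a i) • (Pi.single i 1 : Amb ι)) := by
          simp only [dotR, map_smul, smul_eq_mul]
          exact Finset.sum_congr rfl fun i _ => mul_comm _ _
      _ = f (∑ i, (castV a i) • (Pi.single i 1 : Amb ι)) := (map_sum f _ _).symm
      _ = f (castV a) := by rw [← hv]
  rw [hrep]
  exact hgt.le

end MySep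

/-- `𝓟_X` is the unique `ℤ`-valued function on `Γ` satisfying `∇_X f = δ₀` whose support
is contained in the cone `C(X)`. -/
theorem partFn_unique {ι : Type*} [Fintype ι] (X : List (ZLat ι))
    (hX0 : ∀ a ∈ X, a ≠ 0) (hspan : spanOf X = ⊤) (hpt : PointedList X) :
    (nabL X (partFn X) = delta0 ∧
      Function.support (partFn X) ⊆ {γ | castV γ ∈ coneC X}) ∧
    ∀ f : ZLat ι → ℤ, nabL X f = delta0 →
      Function.support f ⊆ {γ | castV γ ∈ coneC X} → f = partFn X := by
  obtain ⟨u, c, hc, hu⟩ := exists_pos_functional X hX0 hpt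
  have hsupp := partFn_support X
  refine ⟨⟨nabL_partFn hc X hu, hsupp⟩, ?_⟩
  intro f hf hfsupp
  have hvanish : ∀ γ, dotR u (castV γ) < 0 → (f - partFn X) γ = 0 := by
    intro γ hγ
    have h1 : f γ = 0 := by
      by_contra hne
      exact absurd (cone_nonneg hu hc (hfsupp hne)) (not_le.mpr hγ)
    have h2 : partFn X γ = 0 := by
      by_contra hne
      exact absurd (cone_nonneg hu hc (hsupp hne)) (not_le.mpr hγ)
    simp [h1, h2]
  have hz : nabL X (f - partFn X) = 0 := by
    rw [nabL_sub, hf, nabL_partFn hc X hu, sub_self]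
  have hfin := nabL_eq_zero_imp hc X hu _ hvanish hz
  funext γ
  have := congrFun hfin γ
  simp only [Pi.sub_apply, Pi.zero_apply] at this
  linarith
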